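/- arXiv:2502.02932 — 12 statements merged into one kernel-verified Lean document; each statement's English description precedes it below -/
import Mathlib

section
/- Let (X,d) be a metric space, let α > 1 be a real number, and let x_p, x_e, x, m ∈ X. Assume d(x, x_p) ≥ α·d(x, x_e), that m lies on a geodesic from x_e to x in the sense that d(x_e, m) + d(m, x) = d(x_e, x), and that m ≠ x. Then d(m, x_p) > α·d(m, x_e). -/
/-- In a metric space, if `d(x, x_p) ≥ α·d(x, x_e)` with `α > 1`, and `m` lies
on a geodesic from `x_e` to `x` (i.e. `d(x_e, m) + d(m, x) = d(x_e, x)`) with `m ≠ x`, then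
`d(m, x_p) > α·d(m, x_e)`. -/
theorem stmt0 {X : Type*} [MetricSpace X] {α : ℝ} (hα : 1 < α)
    (x_p x_e x m : X)
    (hx : α * dist x x_e ≤ dist x x_p)
    (hm : dist x_e m + dist m x = dist x_e x)
    (hne : m ≠ x) :
    α * dist m x_e < dist m x_p := by
  have h1 : dist x x_p ≤ dist x m + dist m x_p := dist_triangle x m x_p
  have h2 : (0:ℝ) < dist m x := dist_pos.mpr hne
  have h3 : dist x_e m = dist m x_e := dist_comm _ _
  have h4 : dist x_e x = dist x x_e := dist_comm _ _
  have h5 : dist x m = dist m x := dist_comm _ _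
  nlinarith
end

section
/- Let α > 1 and l ≥ 0 be real numbers and let x_p, x_e ∈ ℝ² (the Euclidean plane) with ‖x_p − x_e‖ > l. Let x₁, x₂ ∈ ℝ² lie on the Cartesian oval {x : ‖x − x_p‖ − α‖x − x_e‖ = l}, i.e. ‖x_i − x_p‖ = α‖x_i − x_e‖ + l for i = 1,2. Then ⟨x₁ − x_p, x₂ − x_p⟩/(‖x₁ − x_p‖·‖x₂ − x_p‖) ≥ ⟨x₁ − x_e, x₂ − x_e⟩/(‖x₁ − x_e‖·‖x₂ − x_e‖); that is, the angle subtended by x₁ and x₂ at x_p is at most the angle subtended at x_e. -/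
open scoped RealInnerProductSpace

/-- For `α > 1`, `l ≥ 0`, pursuer/evader positions `x_p, x_e ∈ ℝ²` with
`‖x_p − x_e‖ > l`, and points `x₁, x₂` on the Cartesian oval
`{x : ‖x − x_p‖ = α‖x − x_e‖ + l}`, the cosine of the angle subtended by `x₁, x₂` at `x_p`
is at least the cosine of the angle subtended at `x_e`. -/
theorem stmt1 (α l : ℝ) (hα : 1 < α) (hl : 0 ≤ l)
    (x_p x_e x₁ x₂ : EuclideanSpace ℝ (Fin 2))
    (hpe : l < ‖x_p - x_e‖)
    (h₁ : ‖x₁ - x_p‖ = α * ‖x₁ - x_e‖ + l)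
    (h₂ : ‖x₂ - x_p‖ = α * ‖x₂ - x_e‖ + l) :
    ⟪x₁ - x_e, x₂ - x_e⟫ / (‖x₁ - x_e‖ * ‖x₂ - x_e‖) ≤
      ⟪x₁ - x_p, x₂ - x_p⟫ / (‖x₁ - x_p‖ * ‖x₂ - x_p‖) := by
  set b₁ := ‖x₁ - x_e‖ with hb₁def
  set b₂ := ‖x₂ - x_e‖ with hb₂def
  set a₁ := ‖x₁ - x_p‖ with ha₁def
  set a₂ := ‖x₂ - x_p‖ with ha₂def
  set d := ‖x₁ - x₂‖ with hddef
  -- positivity of b₁, b₂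
  have hb₁ : 0 < b₁ := by
    rcases (norm_nonneg (x₁ - x_e)).lt_or_eq with h | h
    · exact h
    · exfalso
      have hx : x₁ = x_e := sub_eq_zero.mp (norm_eq_zero.mp h.symm)
      have ha : a₁ = ‖x_p - x_e‖ := by rw [ha₁def, hx, norm_sub_rev]
      have hb : b₁ = 0 := h.symm
      rw [hb, mul_zero, zero_add, ha] at h₁
      linarith
  have hb₂ : 0 < b₂ := by
    rcases (norm_nonneg (x₂ - x_e)).lt_or_eq with h | h
    · exact h
    · exfalso
      have hx : x₂ = x_e := sub_eq_zero.mp (norm_eq_zero.mp h.symm)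
      have ha : a₂ = ‖x_p - x_e‖ := by rw [ha₂def, hx, norm_sub_rev]
      have hb : b₂ = 0 := h.symm
      rw [hb, mul_zero, zero_add, ha] at h₂
      linarith
  have ha₁ : 0 < a₁ := by rw [h₁]; nlinarith
  have ha₂ : 0 < a₂ := by rw [h₂]; nlinarith
  -- law of cosines
  have hp : ⟪x₁ - x_p, x₂ - x_p⟫ = (a₁ ^ 2 + a₂ ^ 2 - d ^ 2) / 2 := by
    have h := @norm_sub_sq_real (EuclideanSpace ℝ (Fin 2)) _ _ (x₁ - x_p) (x₂ - x_p)
    have he : (x₁ - x_p) - (x₂ - x_p) = x₁ - x₂ := by abel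
    rw [he] at h
    rw [← hddef, ← ha₁def, ← ha₂def] at h
    linarith
  have hev : ⟪x₁ - x_e, x₂ - x_e⟫ = (b₁ ^ 2 + b₂ ^ 2 - d ^ 2) / 2 := by
    have h := @norm_sub_sq_real (EuclideanSpace ℝ (Fin 2)) _ _ (x₁ - x_e) (x₂ - x_e)
    have he : (x₁ - x_e) - (x₂ - x_e) = x₁ - x₂ := by abel
    rw [he] at h
    rw [← hddef, ← hb₁def, ← hb₂def] at h
    linarith
  -- triangle inequality : d ≥ |a₁ - a₂|
  have htri : |a₁ - a₂| ≤ d := by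
    have := abs_norm_sub_norm_le (x₁ - x_p) (x₂ - x_p)
    have he : (x₁ - x_p) - (x₂ - x_p) = x₁ - x₂ := by abel
    rw [he] at this
    exact this
  have hd2 : (a₁ - a₂) ^ 2 ≤ d ^ 2 := by
    have h0 : (0:ℝ) ≤ d := norm_nonneg _
    nlinarith [abs_nonneg (a₁ - a₂), sq_abs (a₁ - a₂)]
  have hα2 : (1:ℝ) ≤ α ^ 2 := by nlinarith
  have hα0 : (0:ℝ) ≤ α := by linarith
  have hbb : (0:ℝ) < b₁ * b₂ := mul_pos hb₁ hb₂
  have hd2' : α ^ 2 * (b₁ - b₂) ^ 2 ≤ d ^ 2 := by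
    rw [h₁, h₂] at hd2
    have he : (α * b₁ + l - (α * b₂ + l)) ^ 2 = α ^ 2 * (b₁ - b₂) ^ 2 := by ring
    linarith [hd2, he]
  have hs : (0:ℝ) ≤ α * l * (b₁ + b₂) :=
    mul_nonneg (mul_nonneg hα0 hl) (by linarith : (0:ℝ) ≤ b₁ + b₂)
  have hK : (0:ℝ) ≤ (α ^ 2 - 1) * (b₁ * b₂) + α * l * (b₁ + b₂) + l ^ 2 :=
    add_nonneg (add_nonneg (mul_nonneg (by linarith) hbb.le) hs) (sq_nonneg l)
  have ht1 : (0:ℝ) ≤ (d ^ 2 - α ^ 2 * (b₁ - b₂) ^ 2) *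
      ((α ^ 2 - 1) * (b₁ * b₂) + α * l * (b₁ + b₂) + l ^ 2) :=
    mul_nonneg (by linarith) hK
  have ht2 : (0:ℝ) ≤ (b₁ - b₂) ^ 2 *
      (α ^ 2 * (α ^ 2 - 1) * (b₁ * b₂) + (α ^ 2 - 1) * (α * l * (b₁ + b₂) + l ^ 2)) := by
    apply mul_nonneg (sq_nonneg _)
    have h1 : (0:ℝ) ≤ α ^ 2 * (α ^ 2 - 1) * (b₁ * b₂) := by
      apply mul_nonneg (mul_nonneg (sq_nonneg α) (by linarith)) hbb.le
    have h2 : (0:ℝ) ≤ (α ^ 2 - 1) * (α * l * (b₁ + b₂) + l ^ 2) :=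
      mul_nonneg (by linarith) (add_nonneg hs (sq_nonneg l))
    linarith
  rw [hp, hev, div_le_div_iff₀ (by positivity) (by positivity), h₁, h₂]
  have hid : ((α * b₁ + l) ^ 2 + (α * b₂ + l) ^ 2 - d ^ 2) / 2 * (b₁ * b₂) -
      (b₁ ^ 2 + b₂ ^ 2 - d ^ 2) / 2 * ((α * b₁ + l) * (α * b₂ + l)) =
      ((d ^ 2 - α ^ 2 * (b₁ - b₂) ^ 2) *
        ((α ^ 2 - 1) * (b₁ * b₂) + α * l * (b₁ + b₂) + l ^ 2) +
       (b₁ - b₂) ^ 2 *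
        (α ^ 2 * (α ^ 2 - 1) * (b₁ * b₂) + (α ^ 2 - 1) * (α * l * (b₁ + b₂) + l ^ 2))) / 2 := by
    ring
  linarith [ht1, ht2, hid]
end

section
/- Let α > 1 and 0 ≤ l < σ be real numbers, let r₂ ∈ [(σ−l)/(α+1), (σ−l)/(α−1)], and set r₁ = α·r₂ + l. Define f₁ = α·r₁²·r₂ − 2·r₁·r₂² + α·r₂³ − α·σ²·r₂ and f₂ = r₁³ − 2α·r₁²·r₂ + r₁·r₂² − σ²·r₁. Then f₂ < 0, f₁ + f₂ < 0, and f₁ − f₂ > 0; in particular |f₁| < |f₂|. -/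
/-- With `α > 1`, `0 ≤ l < σ`, `r₂ ∈ [(σ−l)/(α+1), (σ−l)/(α−1)]`,
`r₁ = α r₂ + l`, `f₁ = α r₁² r₂ − 2 r₁ r₂² + α r₂³ − α σ² r₂` and
`f₂ = r₁³ − 2α r₁² r₂ + r₁ r₂² − σ² r₁`, one has `f₂ < 0`, `f₁ + f₂ < 0`, `f₁ − f₂ > 0`,
and in particular `|f₁| < |f₂|`. -/
theorem stmt2 (α l σ r₁ r₂ f₁ f₂ : ℝ) (hα : 1 < α) (hl : 0 ≤ l) (hσ : l < σ)
    (hr₂ : r₂ ∈ Set.Icc ((σ - l) / (α + 1)) ((σ - l) / (α - 1)))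
    (hr₁ : r₁ = α * r₂ + l)
    (hf₁ : f₁ = α * r₁ ^ 2 * r₂ - 2 * r₁ * r₂ ^ 2 + α * r₂ ^ 3 - α * σ ^ 2 * r₂)
    (hf₂ : f₂ = r₁ ^ 3 - 2 * α * r₁ ^ 2 * r₂ + r₁ * r₂ ^ 2 - σ ^ 2 * r₁) :
    f₂ < 0 ∧ f₁ + f₂ < 0 ∧ 0 < f₁ - f₂ ∧ |f₁| < |f₂| := by
  obtain ⟨h1, h2⟩ := hr₂
  have ha1 : (0:ℝ) < α + 1 := by linarith
  have ha2 : (0:ℝ) < α - 1 := by linarith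
  have hsum : σ ≤ r₁ + r₂ := by
    have := (div_le_iff₀ ha1).mp h1; nlinarith
  have hdiff : r₁ - r₂ ≤ σ := by
    have := (le_div_iff₀ ha2).mp h2; nlinarith
  have hr₂pos : 0 < r₂ := by
    have : (0:ℝ) < (σ - l) / (α + 1) := div_pos (by linarith) ha1
    linarith
  have hr₁pos : 0 < r₁ := by nlinarith
  have hσpos : 0 < σ := by linarith
  have hdr : r₂ < r₁ := by nlinarith
  have e1 : (0:ℝ) ≤ σ - (r₁ - r₂) := by linarith
  have e2 : (0:ℝ) ≤ r₁ + r₂ - σ := by linarith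
  have hf2 : f₂ < 0 := by
    nlinarith [mul_nonneg hr₁pos.le (mul_nonneg e1 (by linarith : (0:ℝ) ≤ σ + r₁ - r₂)),
      mul_pos (mul_pos (by linarith : (0:ℝ) < α - 1) (mul_pos hr₁pos hr₁pos)) hr₂pos]
  have A : l * (r₁ - r₂) ≤ σ * σ :=
    mul_le_mul hσ.le hdiff (by linarith) hσpos.le
  have hfs : f₁ + f₂ < 0 := by
    nlinarith [mul_le_mul_of_nonneg_right A (by linarith : (0:ℝ) ≤ r₁ + r₂),
      mul_pos (mul_pos hσpos hσpos) (mul_pos (by linarith : (0:ℝ) < α - 1) hr₂pos)]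
  have e3 : (0:ℝ) < (α^2 - 1) * r₂ + (α - 1) * l := by nlinarith
  have hfd : 0 < f₁ - f₂ := by
    nlinarith [mul_pos hr₁pos hr₂pos,
      mul_nonneg hl (mul_nonneg e1 (by linarith : (0:ℝ) ≤ σ + r₁ - r₂)),
      mul_pos (mul_pos hr₁pos hr₂pos) e3]
  refine ⟨hf2, hfs, hfd, ?_⟩
  rw [abs_of_neg hf2, abs_lt]
  constructor <;> linarith
end

section
/- Let α > 1 and let P, E, C ∈ ℝ² be pairwise distinct points with ‖C − P‖ ≥ α·‖C − E‖. Then α·⟨E − P, C − P⟩/(‖E − P‖·‖C − P‖) + ⟨P − E, C − E⟩/(‖P − E‖·‖C − E‖) ≥ α − 1. Equivalently, writing ψ for the angle at P between C − P and E − P and χ for the angle at E between C − E and P − E, one has −α·cos ψ − cos χ ≤ 1 − α. -/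
open scoped RealInnerProductSpace

/-- For `α > 1` and pairwise distinct `P, E, C ∈ ℝ²` with `‖C − P‖ ≥ α‖C − E‖`,
`α·cos ψ + cos χ ≥ α − 1`, where `ψ` is the angle at `P` between `C − P` and `E − P` and `χ`
is the angle at `E` between `C − E` and `P − E`. -/
theorem stmt3 (α : ℝ) (hα : 1 < α) (P E C : EuclideanSpace ℝ (Fin 2))
    (hPE : P ≠ E) (hPC : P ≠ C) (hEC : E ≠ C)
    (h : α * ‖C - E‖ ≤ ‖C - P‖) :
    α - 1 ≤ α * (⟪E - P, C - P⟫ / (‖E - P‖ * ‖C - P‖)) +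
      ⟪P - E, C - E⟫ / (‖P - E‖ * ‖C - E‖) := by
  have hPEr : ‖P - E‖ = ‖E - P‖ := norm_sub_rev _ _
  have ha : (0:ℝ) < ‖E - P‖ := norm_pos_iff.2 (sub_ne_zero.2 (Ne.symm hPE))
  have hb : (0:ℝ) < ‖C - P‖ := norm_pos_iff.2 (sub_ne_zero.2 (Ne.symm hPC))
  have hc : (0:ℝ) < ‖C - E‖ := norm_pos_iff.2 (sub_ne_zero.2 (Ne.symm hEC))
  -- key identity: sum of the two inner products is ‖E - P‖²
  have hkey : ⟪E - P, C - P⟫ + ⟪P - E, C - E⟫ = ‖E - P‖ ^ 2 := by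
    have h1 : (C - P : EuclideanSpace ℝ (Fin 2)) = (C - E) + (E - P) := by abel
    have h2 : (P - E : EuclideanSpace ℝ (Fin 2)) = -(E - P) := by abel
    rw [h1, h2, inner_add_right, inner_neg_left, real_inner_self_eq_norm_sq]
    ring
  -- Cauchy-Schwarz lower bound
  have hCS : -(‖P - E‖ * ‖C - E‖) ≤ ⟪P - E, C - E⟫ := by
    have := abs_real_inner_le_norm (P - E) (C - E)
    have := neg_abs_le (⟪P - E, C - E⟫ : ℝ)
    linarith
  -- triangle inequality
  have htri : ‖C - P‖ ≤ ‖C - E‖ + ‖E - P‖ := by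
    have := dist_triangle C E P
    simpa [dist_eq_norm] using this
  rw [hPEr] at hCS ⊢
  set a := ‖E - P‖
  set b := ‖C - P‖
  set c := ‖C - E‖
  set X := (⟪E - P, C - P⟫ : ℝ)
  set Y := (⟪P - E, C - E⟫ : ℝ)
  have h1 : α * (X / (a * b)) + Y / (a * c) = (α * c * X + b * Y) / (a * b * c) := by
    field_simp
  rw [h1, le_div_iff₀ (by positivity)]
  nlinarith [mul_nonneg (by linarith : (0:ℝ) ≤ Y + a * c) (by linarith : (0:ℝ) ≤ b - α * c),
    mul_nonneg (by linarith : (0:ℝ) ≤ c + a - b) (mul_pos ha hc).le,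
    mul_pos ha hc, mul_pos hb hc, mul_pos ha hb]
end

section
/- Let α > 1 and define f(χ) = −α·√(1 − sin²χ/α²) − cos χ. Then f is strictly increasing on the interval [0, π], and consequently f(χ) ≤ f(π) = 1 − α for every χ ∈ [0, π]. -/
/-- For `α > 1`, the function `f(χ) = −α·√(1 − sin²χ/α²) − cos χ` is strictly
increasing on `[0, π]`, `f(π) = 1 − α`, and consequently `f(χ) ≤ 1 − α` on `[0, π]`. -/
theorem stmt4 (α : ℝ) (hα : 1 < α) :
    StrictMonoOn (fun χ : ℝ => -α * Real.sqrt (1 - Real.sin χ ^ 2 / α ^ 2) - Real.cos χ)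
      (Set.Icc 0 Real.pi) ∧
    (-α * Real.sqrt (1 - Real.sin Real.pi ^ 2 / α ^ 2) - Real.cos Real.pi) = 1 - α ∧
    ∀ χ ∈ Set.Icc 0 Real.pi,
      -α * Real.sqrt (1 - Real.sin χ ^ 2 / α ^ 2) - Real.cos χ ≤ 1 - α := by
  have hα0 : (0:ℝ) < α := lt_trans one_pos hα
  have key : ∀ χ : ℝ, -α * Real.sqrt (1 - Real.sin χ ^ 2 / α ^ 2) - Real.cos χ
      = -(Real.sqrt (α^2 - 1 + Real.cos χ^2) + Real.cos χ) := by
    intro χ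
    have hs : Real.sin χ ^ 2 + Real.cos χ ^ 2 = 1 := Real.sin_sq_add_cos_sq χ
    have h1 : 1 - Real.sin χ ^ 2 / α ^ 2 = (α^2 - 1 + Real.cos χ^2) / α^2 := by
      field_simp; linarith
    have hA : (0:ℝ) ≤ α^2 - 1 + Real.cos χ^2 := by nlinarith [sq_nonneg (Real.cos χ)]
    rw [h1, Real.sqrt_div hA, Real.sqrt_sq hα0.le]
    field_simp
    ring
  have gm : ∀ c1 c2 : ℝ, c1 < c2 →
      Real.sqrt (α^2 - 1 + c1^2) + c1 < Real.sqrt (α^2 - 1 + c2^2) + c2 := by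
    intro c1 c2 hc
    have hA1 : (0:ℝ) ≤ α^2 - 1 + c1^2 := by nlinarith [sq_nonneg c1]
    have hA2 : (0:ℝ) ≤ α^2 - 1 + c2^2 := by nlinarith [sq_nonneg c2]
    set s1 := Real.sqrt (α^2 - 1 + c1^2) with hs1
    set s2 := Real.sqrt (α^2 - 1 + c2^2) with hs2
    have h1 : s1^2 = α^2 - 1 + c1^2 := Real.sq_sqrt hA1
    have h2 : s2^2 = α^2 - 1 + c2^2 := Real.sq_sqrt hA2
    have hs1n : 0 ≤ s1 := Real.sqrt_nonneg _
    have hs2n : 0 ≤ s2 := Real.sqrt_nonneg _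
    have hp1 : 0 < s1 + c1 := by nlinarith
    have hp2 : 0 < s2 + c2 := by nlinarith
    nlinarith [mul_pos hp1 hp2, mul_pos (mul_pos hp1 hp2) (sub_pos.mpr hc)]
  have mono : StrictMonoOn
      (fun χ : ℝ => -α * Real.sqrt (1 - Real.sin χ ^ 2 / α ^ 2) - Real.cos χ)
      (Set.Icc 0 Real.pi) := by
    intro x hx y hy hxy
    simp only [key]
    have hcos : Real.cos y < Real.cos x := Real.strictAntiOn_cos hx hy hxy
    have := gm _ _ hcos
    linarith
  have hfpi : (-α * Real.sqrt (1 - Real.sin Real.pi ^ 2 / α ^ 2) - Real.cos Real.pi)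
      = 1 - α := by
    rw [key Real.pi, Real.cos_pi]
    have : α^2 - 1 + (-1:ℝ)^2 = α^2 := by ring
    rw [this, Real.sqrt_sq hα0.le]
    ring
  refine ⟨mono, hfpi, ?_⟩
  intro χ hχ
  rcases eq_or_lt_of_le hχ.2 with h | h
  · rw [h, hfpi]
  · have hpi : Real.pi ∈ Set.Icc 0 Real.pi := ⟨Real.pi_pos.le, le_refl _⟩
    have := mono hχ hpi h
    simp only at this
    rw [hfpi] at this
    exact this.le
end

section
/- Let α > 1 and let P, E, C ∈ ℝ² be pairwise distinct with ‖C − P‖ ≥ α·‖C − E‖. Let cos ψ = ⟨E − P, C − P⟩/(‖E − P‖·‖C − P‖) and cos χ = ⟨P − E, C − E⟩/(‖P − E‖·‖C − E‖). Then the angle ψ is acute and cos ψ ≥ √(1 − (1 − cos²χ)/α²) = √(1 − sin²χ/α²) ≥ √(1 − 1/α²) > 0. -/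
set_option maxHeartbeats 1000000


open scoped RealInnerProductSpace

/-- For `α > 1` and pairwise distinct `P, E, C ∈ ℝ²` with `‖C − P‖ ≥ α‖C − E‖`,
writing `cos ψ` and `cos χ` for the cosines of the interior angles at `P` and at `E`, one has
`cos ψ ≥ √(1 − (1 − cos²χ)/α²) ≥ √(1 − 1/α²) > 0`; in particular `ψ` is acute. -/
theorem stmt5 (α : ℝ) (hα : 1 < α) (P E C : EuclideanSpace ℝ (Fin 2))
    (hPE : P ≠ E) (hPC : P ≠ C) (hEC : E ≠ C)
    (h : α * ‖C - E‖ ≤ ‖C - P‖) :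
    Real.sqrt (1 - (1 - (⟪P - E, C - E⟫ / (‖P - E‖ * ‖C - E‖)) ^ 2) / α ^ 2) ≤
        ⟪E - P, C - P⟫ / (‖E - P‖ * ‖C - P‖) ∧
    Real.sqrt (1 - 1 / α ^ 2) ≤
        Real.sqrt (1 - (1 - (⟪P - E, C - E⟫ / (‖P - E‖ * ‖C - E‖)) ^ 2) / α ^ 2) ∧
    0 < Real.sqrt (1 - 1 / α ^ 2) := by
  have hα0 : (0:ℝ) < α := lt_trans one_pos hα
  set a : ℝ := ‖E - P‖ with ha_def
  set b : ℝ := ‖C - P‖ with hb_def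
  set c : ℝ := ‖C - E‖ with hc_def
  set t : ℝ := ⟪E - P, C - P⟫ with ht_def
  set s : ℝ := ⟪P - E, C - E⟫ with hs_def
  have ha : 0 < a := by
    rw [ha_def, norm_pos_iff, sub_ne_zero]; exact fun hh => hPE hh.symm
  have hb : 0 < b := by
    rw [hb_def, norm_pos_iff, sub_ne_zero]; exact fun hh => hPC hh.symm
  have hc : 0 < c := by
    rw [hc_def, norm_pos_iff, sub_ne_zero]; exact fun hh => hEC hh.symm
  have hPEnorm : ‖P - E‖ = a := by rw [ha_def, norm_sub_rev]
  have hs : s = a ^ 2 - t := by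
    have h1 : P - E = -(E - P) := by abel
    have h2 : C - E = (C - P) - (E - P) := by abel
    rw [hs_def, ht_def, ha_def, h1, h2, inner_neg_left, inner_sub_right,
      real_inner_self_eq_norm_sq]
    ring
  have hc2 : c ^ 2 = b ^ 2 + a ^ 2 - 2 * t := by
    have h2 : C - E = (C - P) - (E - P) := by abel
    rw [hc_def, h2, ht_def, ha_def, hb_def, norm_sub_sq_real,
      real_inner_comm (C - P) (E - P)]
    ring
  have hcs : |s| ≤ a * c := by
    rw [hs_def, ← hPEnorm, hc_def]
    exact abs_real_inner_le_norm _ _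
  clear_value a b c t s
  have hα2 : 1 < α ^ 2 := by nlinarith
  have hb2 : α ^ 2 * c ^ 2 ≤ b ^ 2 := by nlinarith [mul_pos hα0 hc]
  have ht : 0 < t := by nlinarith [mul_pos hc hc, sq_nonneg a]
  have hG : 0 ≤ a ^ 2 * c ^ 2 - s ^ 2 := by nlinarith [abs_nonneg s, sq_abs s]
  have hGram : a ^ 2 * b ^ 2 - t ^ 2 = a ^ 2 * c ^ 2 - s ^ 2 := by
    rw [hs]; nlinarith [hc2]
  have htab : 0 < t / (a * b) := div_pos ht (mul_pos ha hb)
  have key : 1 - (1 - (s / (a * c)) ^ 2) / α ^ 2 ≤ (t / (a * b)) ^ 2 := by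
    have e1 : 1 - (1 - (s / (a * c)) ^ 2) / α ^ 2
        = 1 - (a ^ 2 * c ^ 2 - s ^ 2) / (α ^ 2 * (a ^ 2 * c ^ 2)) := by
      field_simp
    have e2 : (t / (a * b)) ^ 2 = 1 - (a ^ 2 * b ^ 2 - t ^ 2) / (a ^ 2 * b ^ 2) := by
      field_simp
      ring
    rw [e1, e2, hGram]
    have hle : α ^ 2 * (a ^ 2 * c ^ 2) ≤ a ^ 2 * b ^ 2 := by nlinarith [sq_nonneg a]
    have hdd : (a ^ 2 * c ^ 2 - s ^ 2) / (a ^ 2 * b ^ 2)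
        ≤ (a ^ 2 * c ^ 2 - s ^ 2) / (α ^ 2 * (a ^ 2 * c ^ 2)) := by
      rw [div_le_div_iff₀ (mul_pos (pow_pos ha 2) (pow_pos hb 2))
        (mul_pos (pow_pos hα0 2) (mul_pos (pow_pos ha 2) (pow_pos hc 2)))]
      exact mul_le_mul_of_nonneg_left hle hG
    linarith
  have part1 : Real.sqrt (1 - (1 - (s / (a * c)) ^ 2) / α ^ 2) ≤ t / (a * b) := by
    calc Real.sqrt (1 - (1 - (s / (a * c)) ^ 2) / α ^ 2)
        ≤ Real.sqrt ((t / (a * b)) ^ 2) := Real.sqrt_le_sqrt key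
      _ = t / (a * b) := Real.sqrt_sq htab.le
  have part2 : Real.sqrt (1 - 1 / α ^ 2) ≤
      Real.sqrt (1 - (1 - (s / (a * c)) ^ 2) / α ^ 2) := by
    apply Real.sqrt_le_sqrt
    have hnum : 1 - (s / (a * c)) ^ 2 ≤ 1 := by nlinarith [sq_nonneg (s / (a * c))]
    have hd : (1 - (s / (a * c)) ^ 2) / α ^ 2 ≤ 1 / α ^ 2 := by gcongr
    linarith
  have part3 : 0 < Real.sqrt (1 - 1 / α ^ 2) := by
    apply Real.sqrt_pos.mpr
    have : 1 / α ^ 2 < 1 := by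
      rw [div_lt_one (by positivity)]
      exact hα2
    linarith
  rw [hPEnorm]
  exact ⟨part1, part2, part3⟩
end

section
/- Consider the obstacle-free pursuit–evasion game in ℝ² with speed ratio α > 1, capture radius l ≥ 0, and initial positions x_p0, x_e0 with ‖x_p0 − x_e0‖ > l. Define the evader's reachable region R_e as the set of points x ∈ ℝ² such that there exists an evader control u_e with the property that for every pursuer control u_p there is a time t ∈ [0, t_f(u_p, u_e)) with x_e(t) = x. Then R_e = D_l(x_p0, x_e0) = {x ∈ ℝ² : ‖x − x_p0‖ − α·‖x − x_e0‖ > l}. -/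
open MeasureTheory
open scoped ENNReal RealInnerProductSpace

noncomputable section

/-- The Euclidean plane. -/
abbrev Pt := EuclideanSpace ℝ (Fin 2)

/-- A function is piecewise continuous if on every compact interval it is continuous
except at finitely many points. -/
def PiecewiseContinuous (u : ℝ → Pt) : Prop :=
  ∀ a b : ℝ, ∃ s : Finset ℝ, ∀ t ∈ Set.Icc a b, t ∉ s → ContinuousAt u t

/-- A control: a piecewise continuous function with `‖u t‖ = 1` for all `t ≥ 0`. -/
def IsControl (u : ℝ → Pt) : Prop :=
  PiecewiseContinuous u ∧ ∀ t : ℝ, 0 ≤ t → ‖u t‖ = 1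

/-- The trajectory from `x₀` at speed `v` under control `u`:
`x(t) = x₀ + v·∫₀ᵗ u(s) ds`. -/
def traj (x₀ : Pt) (v : ℝ) (u : ℝ → Pt) (t : ℝ) : Pt :=
  x₀ + v • ∫ s in (0:ℝ)..t, u s

/-- Capture time with capture radius `l`: `inf {t ≥ 0 : ‖x_p(t) − x_e(t)‖ ≤ l}`,
with `inf ∅ = +∞` (valued in `ℝ≥0∞`). -/
def captureTime (l : ℝ) (xp xe : ℝ → Pt) : ℝ≥0∞ :=
  ⨅ t ∈ {t : ℝ | 0 ≤ t ∧ ‖xp t - xe t‖ ≤ l}, ENNReal.ofReal t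

/-- A strategy `δ` is non-anticipative if, for every `t' > 0`, whenever two evader controls
agree almost everywhere on `[0, t']`, the corresponding pursuer controls agree almost
everywhere on `[0, t']`. -/
def Nonanticipative (δ : (ℝ → Pt) → (ℝ → Pt)) : Prop :=
  ∀ t' : ℝ, 0 < t' → ∀ u u' : ℝ → Pt,
    (∀ᵐ t ∂(volume.restrict (Set.Icc (0:ℝ) t')), u t = u' t) →
    (∀ᵐ t ∂(volume.restrict (Set.Icc (0:ℝ) t')), δ u t = δ u' t)

/-! ### Auxiliary lemmas -/

/-- A control is interval-integrable on any `[a,b] ⊆ [0,∞)`. -/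
lemma ctrl_intInt {u : ℝ → Pt} (hu : IsControl u) {a b : ℝ}
    (ha : 0 ≤ a) (hab : a ≤ b) : IntervalIntegrable u volume a b := by
  obtain ⟨s, hs⟩ := hu.1 a b
  rw [intervalIntegrable_iff, Set.uIoc_of_le hab]
  have hcont : ContinuousOn u (Set.Icc a b \ ↑s) := fun t ht =>
    (hs t ht.1 ht.2).continuousWithinAt
  have h1 : AEStronglyMeasurable u (volume.restrict (Set.Icc a b \ ↑s)) :=
    hcont.aestronglyMeasurable (measurableSet_Icc.diff s.finite_toSet.measurableSet)
  rw [Measure.restrict_congr_set (diff_null_ae_eq_self (s.finite_toSet.measure_zero _))] at h1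
  have hmeas : AEStronglyMeasurable u (volume.restrict (Set.Ioc a b)) :=
    h1.mono_measure (Measure.restrict_mono Set.Ioc_subset_Icc_self le_rfl)
  have hbdd : ∀ᵐ t ∂(volume.restrict (Set.Ioc a b)), ‖u t‖ ≤ 1 := by
    filter_upwards [ae_restrict_mem measurableSet_Ioc] with t ht
    exact le_of_eq (hu.2 t (ha.trans ht.1.le))
  have hone : IntegrableOn (fun _ : ℝ => (1:ℝ)) (Set.Ioc a b) volume := by
    exact integrableOn_const measure_Ioc_lt_top.ne
  exact Integrable.mono' hone hmeas hbdd

/-- Norm bound on the primitive of a control. -/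
lemma ctrl_norm_int {u : ℝ → Pt} (hu : IsControl u) {a b : ℝ}
    (ha : 0 ≤ a) (hab : a ≤ b) : ‖∫ s in a..b, u s‖ ≤ b - a := by
  have h := intervalIntegral.norm_integral_le_of_norm_le_const (C := 1) (f := u)
    (a := a) (b := b) (fun x hx => by
      rw [Set.uIoc_of_le hab] at hx
      exact le_of_eq (hu.2 x (ha.trans hx.1.le)))
  rwa [one_mul, abs_of_nonneg (sub_nonneg.2 hab)] at h

/-- Constant unit controls are controls. -/
lemma const_ctrl {e : Pt} (he : ‖e‖ = 1) : IsControl (fun _ => e) :=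
  ⟨fun _ _ => ⟨∅, fun _ _ _ => continuousAt_const⟩, fun _ _ => he⟩

/-- Bang-bang controls are controls. -/
lemma bang_ctrl {e : Pt} (he : ‖e‖ = 1) (s₁ : ℝ) :
    IsControl (fun t => if t < s₁ then e else -e) := by
  constructor
  · intro a b
    refine ⟨{s₁}, fun t _ hts => ?_⟩
    simp only [Finset.mem_singleton] at hts
    rcases lt_or_gt_of_ne hts with h | h
    · have : (fun t => if t < s₁ then e else -e) =ᶠ[nhds t] fun _ => e := by
        filter_upwards [Iio_mem_nhds h] with r hr
        exact if_pos hr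
      exact this.continuousAt
    · have : (fun t => if t < s₁ then e else -e) =ᶠ[nhds t] fun _ => -e := by
        filter_upwards [Ioi_mem_nhds h] with r hr
        exact if_neg (not_lt.2 hr.le)
      exact this.continuousAt
  · intro t _
    by_cases h : t < s₁ <;> simp [h, he]

/-- The trajectory moves at speed at most `|v|` on `[0,∞)`. -/
lemma traj_dist {x₀ : Pt} {v : ℝ} {u : ℝ → Pt} (hu : IsControl u) {s t : ℝ}
    (hs : 0 ≤ s) (hst : s ≤ t) :
    ‖traj x₀ v u t - traj x₀ v u s‖ ≤ |v| * (t - s) := by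
  have h1 : IntervalIntegrable u volume 0 t := ctrl_intInt hu le_rfl (hs.trans hst)
  have h2 : IntervalIntegrable u volume 0 s := ctrl_intInt hu le_rfl hs
  have hsub : traj x₀ v u t - traj x₀ v u s = v • ∫ r in s..t, u r := by
    simp only [traj]
    rw [add_sub_add_left_eq_sub, ← smul_sub,
      intervalIntegral.integral_interval_sub_left h1 h2]
  rw [hsub, norm_smul]
  exact mul_le_mul_of_nonneg_left (ctrl_norm_int hu hs hst) (abs_nonneg v)

lemma traj_dist0 {x₀ : Pt} {v : ℝ} {u : ℝ → Pt} (hu : IsControl u) {t : ℝ}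
    (ht : 0 ≤ t) : ‖traj x₀ v u t - x₀‖ ≤ |v| * t := by
  have h := traj_dist (x₀ := x₀) (v := v) hu le_rfl ht
  simpa [traj] using h

/-- Every point lies in some unit direction from a given base point. -/
lemma unit_dir (y z : Pt) : ∃ e : Pt, ‖e‖ = 1 ∧ z = y + ‖z - y‖ • e := by
  rcases eq_or_ne z y with h | h
  · refine ⟨EuclideanSpace.single 0 1, ?_, by simp [h]⟩
    rw [EuclideanSpace.norm_single]; norm_num
  · have hpos : 0 < ‖z - y‖ := norm_pos_iff.2 (sub_ne_zero.2 h)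
    refine ⟨‖z - y‖⁻¹ • (z - y), ?_, ?_⟩
    · rw [norm_smul, norm_inv, norm_norm, inv_mul_cancel₀ hpos.ne']
    · rw [smul_smul, mul_inv_cancel₀ hpos.ne', one_smul]; abel

/-- In the obstacle-free game with speed ratio `α > 1`, capture radius `l ≥ 0`
and `‖x_p0 − x_e0‖ > l`, the evader's reachable region — the set of points `x` for which
some evader control reaches `x` before capture against every pursuer control — equals the
evader's dominance region `D_l(x_p0, x_e0) = {x : ‖x − x_p0‖ − α‖x − x_e0‖ > l}`. -/
theorem stmt7 (α l : ℝ) (hα : 1 < α) (hl : 0 ≤ l) (x_p0 x_e0 : Pt)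
    (h0 : l < ‖x_p0 - x_e0‖) :
    {x : Pt | ∃ u_e : ℝ → Pt, IsControl u_e ∧
        ∀ u_p : ℝ → Pt, IsControl u_p →
          ∃ t : ℝ, 0 ≤ t ∧
            ENNReal.ofReal t < captureTime l (traj x_p0 α u_p) (traj x_e0 1 u_e) ∧
            traj x_e0 1 u_e t = x} =
      {x : Pt | l < ‖x - x_p0‖ - α * ‖x - x_e0‖} := by
  have hα0 : (0:ℝ) < α := lt_trans one_pos hα
  have he1 : ‖(EuclideanSpace.single 0 1 : Pt)‖ = 1 := by
    rw [EuclideanSpace.norm_single]; norm_num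
  ext x
  simp only [Set.mem_setOf_eq]
  constructor
  · -- reachable ⊆ dominance
    rintro ⟨u_e, hue, hmain⟩
    by_contra hcon
    push_neg at hcon
    -- hcon : ‖x - x_p0‖ - α * ‖x - x_e0‖ ≤ l
    set xe : ℝ → Pt := traj x_e0 1 u_e with hxe_def
    set S : Set ℝ := {t : ℝ | 0 ≤ t ∧ xe t = x} with hS_def
    obtain ⟨t1, ht1, _, hxet1⟩ := hmain (fun _ => EuclideanSpace.single 0 1) (const_ctrl he1)
    have hSne : S.Nonempty := ⟨t1, ht1, hxet1⟩
    have hSbdd : BddBelow S := ⟨0, fun t ht => ht.1⟩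
    set t₀ : ℝ := sInf S with ht₀_def
    have ht₀0 : 0 ≤ t₀ := le_csInf hSne fun t ht => ht.1
    have ht₀le : ∀ t ∈ S, t₀ ≤ t := fun t ht => csInf_le hSbdd ht
    -- xe t₀ = x
    have hxe₀ : xe t₀ = x := by
      by_contra hne
      have hpos : 0 < ‖xe t₀ - x‖ := norm_pos_iff.2 (sub_ne_zero.2 hne)
      obtain ⟨t, htS, htlt⟩ := Real.lt_sInf_add_pos hSne hpos
      rw [← ht₀_def] at htlt
      have h1 : t₀ ≤ t := ht₀le t htS
      have h2 : ‖xe t - xe t₀‖ ≤ |(1:ℝ)| * (t - t₀) := traj_dist hue ht₀0 h1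
      have h3 : ‖xe t₀ - x‖ ≤ t - t₀ := by
        have hflip : xe t₀ - x = -(xe t - xe t₀) := by rw [htS.2]; abel
        rw [hflip, norm_neg]
        simpa using h2
      linarith
    -- evader needs time ≥ ‖x - x_e0‖
    have hxd : ‖x - x_e0‖ ≤ t₀ := by
      have h : ‖xe t₀ - x_e0‖ ≤ |(1:ℝ)| * t₀ := traj_dist0 hue ht₀0
      rw [hxe₀] at h; simpa using h
    obtain ⟨e, he, hxde⟩ := unit_dir x_p0 x
    set d : ℝ := ‖x - x_p0‖ with hd_def
    have hd0 : 0 ≤ d := norm_nonneg _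
    have hdle : d ≤ α * t₀ + l := by
      have h : d ≤ α * ‖x - x_e0‖ + l := by linarith
      nlinarith [mul_le_mul_of_nonneg_left hxd hα0.le]
    -- construct the pursuer control
    obtain ⟨u_p, hup, hclose⟩ :
        ∃ u_p : ℝ → Pt, IsControl u_p ∧ ‖traj x_p0 α u_p t₀ - x‖ ≤ l := by
      rcases le_or_gt (α * t₀) d with hca | hcb
      · -- pursuer heads straight at x
        refine ⟨fun _ => e, const_ctrl he, ?_⟩
        have htr : traj x_p0 α (fun _ => e) t₀ = x_p0 + (α * t₀) • e := by
          simp [traj, intervalIntegral.integral_const, smul_smul]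
        rw [htr, hxde]
        have hcollin : x_p0 + (α * t₀) • e - (x_p0 + d • e) = (α * t₀ - d) • e := by
          rw [sub_smul]; abel
        rw [hcollin, norm_smul, he, mul_one, Real.norm_eq_abs,
          abs_of_nonpos (by linarith)]
        linarith
      · -- pursuer goes out and comes back, arriving exactly at time t₀
        set s₁ : ℝ := (t₀ + d / α) / 2 with hs₁_def
        have hs₁0 : 0 ≤ s₁ := by positivity
        have hdα : d / α < t₀ := (div_lt_iff₀ hα0).2 (by linarith)
        have hs₁t₀ : s₁ ≤ t₀ := by rw [hs₁_def]; linarith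
        refine ⟨fun t => if t < s₁ then e else -e, bang_ctrl he s₁, ?_⟩
        have hint1 : IntervalIntegrable (fun t => if t < s₁ then e else -e) volume 0 s₁ :=
          ctrl_intInt (bang_ctrl he s₁) le_rfl hs₁0
        have hint2 : IntervalIntegrable (fun t => if t < s₁ then e else -e) volume s₁ t₀ :=
          ctrl_intInt (bang_ctrl he s₁) hs₁0 hs₁t₀
        have hI1 : ∫ t in (0:ℝ)..s₁, (if t < s₁ then e else -e) = s₁ • e := by
          rw [intervalIntegral.integral_congr_ae (g := fun _ => e),
            intervalIntegral.integral_const, sub_zero]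
          filter_upwards [(Set.countable_singleton s₁).ae_notMem volume] with r hr hrI
          rw [Set.uIoc_of_le hs₁0] at hrI
          exact if_pos (lt_of_le_of_ne hrI.2 (by simpa using hr))
        have hI2 : ∫ t in s₁..t₀, (if t < s₁ then e else -e) = (t₀ - s₁) • (-e) := by
          rw [intervalIntegral.integral_congr (g := fun _ => -e),
            intervalIntegral.integral_const]
          intro r hr
          rw [Set.uIcc_of_le hs₁t₀] at hr
          exact if_neg (not_lt.2 hr.1)
        have hI : ∫ t in (0:ℝ)..t₀, (if t < s₁ then e else -e) = (d / α) • e := by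
          rw [← intervalIntegral.integral_add_adjacent_intervals hint1 hint2, hI1, hI2,
            smul_neg, ← sub_eq_add_neg, ← sub_smul]
          congr 1
          rw [hs₁_def]; ring
        have htr : traj x_p0 α (fun t => if t < s₁ then e else -e) t₀ = x := by
          rw [traj, hI, smul_smul, mul_div_cancel₀ _ hα0.ne', ← hxde]
        rw [htr, sub_self, norm_zero]
        exact hl
    -- conclude
    obtain ⟨t, ht0, htlt, hxet⟩ := hmain u_p hup
    have htS : t ∈ S := ⟨ht0, hxet⟩
    have hcap : captureTime l (traj x_p0 α u_p) xe ≤ ENNReal.ofReal t₀ := by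
      have hmem : t₀ ∈ {t : ℝ | 0 ≤ t ∧ ‖traj x_p0 α u_p t - xe t‖ ≤ l} :=
        ⟨ht₀0, by rw [hxe₀]; exact hclose⟩
      exact iInf₂_le t₀ hmem
    have habs : ENNReal.ofReal t < ENNReal.ofReal t := by
      calc ENNReal.ofReal t < captureTime l (traj x_p0 α u_p) xe := htlt
        _ ≤ ENNReal.ofReal t₀ := hcap
        _ ≤ ENNReal.ofReal t := ENNReal.ofReal_le_ofReal (ht₀le t htS)
    exact absurd habs (lt_irrefl _)
  · -- dominance ⊆ reachable
    intro hx
    obtain ⟨e, he, hxTe⟩ := unit_dir x_e0 x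
    set T : ℝ := ‖x - x_e0‖ with hT_def
    set D : ℝ := ‖x - x_p0‖ with hD_def
    have hT0 : 0 ≤ T := norm_nonneg _
    have hc : 0 < D - α * T - l := by rw [hD_def, hT_def]; linarith
    set c : ℝ := D - α * T - l with hc_def
    refine ⟨fun _ => e, const_ctrl he, ?_⟩
    intro u_p hup
    have hxet : ∀ t : ℝ, traj x_e0 1 (fun _ => e) t = x_e0 + t • e := by
      intro t
      simp [traj, intervalIntegral.integral_const]
    have hdist : ∀ t : ℝ, ‖traj x_e0 1 (fun _ => e) t - x‖ = |t - T| := by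
      intro t
      rw [hxet, hxTe]
      have hcollin : x_e0 + t • e - (x_e0 + T • e) = (t - T) • e := by
        rw [sub_smul]; abel
      rw [hcollin, norm_smul, he, mul_one, Real.norm_eq_abs]
    refine ⟨T, hT0, ?_, by rw [hxet, ← hxTe]⟩
    have h1α : (0:ℝ) < 1 + α := by linarith
    set ε : ℝ := c / (2 * (1 + α)) with hε_def
    have hεpos : 0 < ε := by positivity
    have hεc : (1 + α) * ε ≤ c / 2 := by
      have : (1 + α) * ε = c / 2 := by
        rw [hε_def]
        field_simp
      exact le_of_eq this
    -- no capture can happen before time T + ε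
    have hkey : ∀ t ∈ {t : ℝ | 0 ≤ t ∧ ‖traj x_p0 α u_p t - traj x_e0 1 (fun _ => e) t‖ ≤ l},
        T + ε ≤ t := by
      rintro t ⟨ht0, htcap⟩
      by_contra hlt
      push_neg at hlt
      have hp : ‖traj x_p0 α u_p t - x_p0‖ ≤ α * t := by
        have h := traj_dist0 (x₀ := x_p0) (v := α) hup ht0
        rwa [abs_of_pos hα0] at h
      have he1' : D - |t - T| ≤ ‖traj x_e0 1 (fun _ => e) t - x_p0‖ := by
        have h1 : D ≤ ‖x - traj x_e0 1 (fun _ => e) t‖ + ‖traj x_e0 1 (fun _ => e) t - x_p0‖ := by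
          rw [hD_def]
          calc ‖x - x_p0‖
              = ‖(x - traj x_e0 1 (fun _ => e) t) + (traj x_e0 1 (fun _ => e) t - x_p0)‖ := by
                congr 1; abel
            _ ≤ _ := norm_add_le _ _
        have h2 : ‖x - traj x_e0 1 (fun _ => e) t‖ = |t - T| := by
          rw [← norm_neg, neg_sub, hdist]
        linarith
      have hge : D - |t - T| - α * t ≤ ‖traj x_p0 α u_p t - traj x_e0 1 (fun _ => e) t‖ := by
        have h3 : ‖traj x_e0 1 (fun _ => e) t - x_p0‖ ≤
            ‖traj x_e0 1 (fun _ => e) t - traj x_p0 α u_p t‖ + ‖traj x_p0 α u_p t - x_p0‖ := by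
          calc ‖traj x_e0 1 (fun _ => e) t - x_p0‖
              = ‖(traj x_e0 1 (fun _ => e) t - traj x_p0 α u_p t) + (traj x_p0 α u_p t - x_p0)‖ := by
                congr 1; abel
            _ ≤ _ := norm_add_le _ _
        have hsymm : ‖traj x_e0 1 (fun _ => e) t - traj x_p0 α u_p t‖ =
            ‖traj x_p0 α u_p t - traj x_e0 1 (fun _ => e) t‖ := by
          rw [← norm_neg, neg_sub]
        rw [hsymm] at h3
        linarith
      have hb : |t - T| + α * t ≤ α * T + (1 + α) * ε := by
        rcases le_or_gt t T with h | h
        · rw [abs_of_nonpos (by linarith)]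
          nlinarith
        · rw [abs_of_pos (by linarith)]
          nlinarith
      have hfin : l < ‖traj x_p0 α u_p t - traj x_e0 1 (fun _ => e) t‖ := by
        have h4 : D - α * T - (1 + α) * ε ≤ D - |t - T| - α * t := by linarith
        have h5 : l + c / 2 ≤ D - α * T - (1 + α) * ε := by
          rw [hc_def] at hεc ⊢; linarith
        linarith
      linarith
    have hlow : ENNReal.ofReal (T + ε) ≤
        captureTime l (traj x_p0 α u_p) (traj x_e0 1 (fun _ => e)) :=
      le_iInf₂ fun t ht => ENNReal.ofReal_le_ofReal (hkey t ht)
    calc ENNReal.ofReal T < ENNReal.ofReal (T + ε) :=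
          (ENNReal.ofReal_lt_ofReal_iff (by linarith)).2 (by linarith)
      _ ≤ _ := hlow

end
end

section
/- Let α > 1 and let x_p, x_e, x ∈ ℝ² with x_p ≠ x_e and ‖x − x_p‖ ≥ α·‖x − x_e‖ (i.e. x lies in the closure of the Apollonius region A(x_p, x_e)). Then every point x' = x_e + s·(x − x_e) with s ∈ [0, 1) satisfies ‖x' − x_p‖ > α·‖x' − x_e‖. -/
/-- For `α > 1`, `x_p ≠ x_e` and `x` in the closure of the Apollonius region
(`‖x − x_p‖ ≥ α‖x − x_e‖`), every point `x' = x_e + s·(x − x_e)` with `s ∈ [0, 1)` lies in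
the open Apollonius region: `‖x' − x_p‖ > α‖x' − x_e‖`. -/
theorem stmt8 (α : ℝ) (hα : 1 < α) (x_p x_e x : EuclideanSpace ℝ (Fin 2))
    (hne : x_p ≠ x_e) (hx : α * ‖x - x_e‖ ≤ ‖x - x_p‖)
    (s : ℝ) (hs : s ∈ Set.Ico (0:ℝ) 1) :
    α * ‖(x_e + s • (x - x_e)) - x_e‖ < ‖(x_e + s • (x - x_e)) - x_p‖ := by
  obtain ⟨hs0, hs1⟩ := hs
  set x' := x_e + s • (x - x_e) with hx'
  have h1 : x' - x_e = s • (x - x_e) := by rw [hx']; abel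
  have h2 : x - x' = (1 - s) • (x - x_e) := by rw [hx']; module
  have n1 : ‖x' - x_e‖ = s * ‖x - x_e‖ := by
    rw [h1, norm_smul, Real.norm_of_nonneg hs0]
  have n2 : ‖x - x'‖ = (1 - s) * ‖x - x_e‖ := by
    rw [h2, norm_smul, Real.norm_of_nonneg (by linarith)]
  by_cases hxe : x = x_e
  · have : x' = x_e := by rw [hx', hxe]; simp
    rw [this]
    simp only [sub_self, norm_zero, mul_zero]
    rw [norm_sub_rev]
    exact norm_sub_pos_iff.mpr hne
  · have hn : 0 < ‖x - x_e‖ := norm_sub_pos_iff.mpr (sub_ne_zero.mp (by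
      intro h; exact hxe (by rwa [sub_eq_zero] at h)))
    have tri : ‖x - x_p‖ ≤ ‖x - x'‖ + ‖x' - x_p‖ := norm_sub_le_norm_sub_add_norm_sub x x' x_p
    rw [n1]
    nlinarith [hx, tri, n2, mul_pos (mul_pos (sub_pos.mpr hα) (sub_pos.mpr hs1)) hn]
end

section
/- Let α > 1 and let x_p, x_e, x ∈ ℝ² with ‖x‖ + ‖x_p‖ ≥ α·‖x − x_e‖ (i.e. x lies in the closure of C(x_p, x_e)). Then every point x' = x_e + s·(x − x_e) with s ∈ [0, 1) and x' ≠ x satisfies ‖x'‖ + ‖x_p‖ > α·‖x' − x_e‖. -/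
/-- For `α > 1` and `x` in the closure of the second-type Cartesian oval region
(`‖x‖ + ‖x_p‖ ≥ α‖x − x_e‖`), every point `x' = x_e + s·(x − x_e)` with `s ∈ [0, 1)` and
`x' ≠ x` lies in the open region: `‖x'‖ + ‖x_p‖ > α‖x' − x_e‖`. -/
theorem stmt9 (α : ℝ) (hα : 1 < α) (x_p x_e x : EuclideanSpace ℝ (Fin 2))
    (hx : α * ‖x - x_e‖ ≤ ‖x‖ + ‖x_p‖)
    (s : ℝ) (hs : s ∈ Set.Ico (0:ℝ) 1) (hne : x_e + s • (x - x_e) ≠ x) :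
    α * ‖(x_e + s • (x - x_e)) - x_e‖ < ‖x_e + s • (x - x_e)‖ + ‖x_p‖ := by
  obtain ⟨hs0, hs1⟩ := hs
  have hdx : x - x_e ≠ 0 := by
    intro h
    apply hne
    rw [h, smul_zero, add_zero]
    have : x = x_e := by linear_combination (norm := abel) h
    exact this.symm
  have hd : (0:ℝ) < ‖x - x_e‖ := norm_pos_iff.mpr hdx
  have h1 : (x_e + s • (x - x_e)) - x_e = s • (x - x_e) := by abel
  have h2 : x - (x_e + s • (x - x_e)) = (1 - s) • (x - x_e) := by
    rw [sub_smul, one_smul]; abel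
  have hn1 : ‖(x_e + s • (x - x_e)) - x_e‖ = s * ‖x - x_e‖ := by
    rw [h1, norm_smul, Real.norm_eq_abs, abs_of_nonneg hs0]
  have hn2 : ‖x‖ - (1 - s) * ‖x - x_e‖ ≤ ‖x_e + s • (x - x_e)‖ := by
    have := norm_sub_norm_le x (x_e + s • (x - x_e))
    rw [h2, norm_smul, Real.norm_eq_abs, abs_of_nonneg (by linarith)] at this
    linarith
  rw [hn1]
  nlinarith [mul_pos (mul_pos (sub_pos.mpr hα) (sub_pos.mpr hs1)) hd]
end

section
/- Let α > 1 and let x_p, x_e, x₁ ∈ ℝ² with x_p ≠ x_e and ‖x₁ − x_p‖ ≥ α·‖x₁ − x_e‖. Then every point x₂ = x_e + s·(x₁ − x_e) with s ∈ [0, 1) satisfies ‖x₂‖ + ‖x_p‖ > α·‖x₂ − x_e‖. In particular, on a ray emanating from x_e there is no point of the Cartesian oval {y : ‖y‖ + ‖x_p‖ = α·‖y − x_e‖} lying strictly between x_e and a point of the closed Apollonius region {y : ‖y − x_p‖ ≥ α·‖y − x_e‖}. -/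
/-- For `α > 1`, `x_p ≠ x_e` and `‖x₁ − x_p‖ ≥ α‖x₁ − x_e‖`, every point
`x₂ = x_e + s·(x₁ − x_e)` with `s ∈ [0, 1)` satisfies `‖x₂‖ + ‖x_p‖ > α‖x₂ − x_e‖`; hence
no point of the Cartesian oval `{y : ‖y‖ + ‖x_p‖ = α‖y − x_e‖}` lies strictly between `x_e`
and a point of the closed Apollonius region on a ray emanating from `x_e`. -/
theorem stmt10 (α : ℝ) (hα : 1 < α) (x_p x_e x₁ : EuclideanSpace ℝ (Fin 2))
    (hne : x_p ≠ x_e) (hx : α * ‖x₁ - x_e‖ ≤ ‖x₁ - x_p‖)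
    (s : ℝ) (hs : s ∈ Set.Ico (0:ℝ) 1) :
    α * ‖(x_e + s • (x₁ - x_e)) - x_e‖ < ‖x_e + s • (x₁ - x_e)‖ + ‖x_p‖ := by
  obtain ⟨hs0, hs1⟩ := hs
  by_cases h1 : x₁ = x_e
  · subst h1
    simp only [sub_self, smul_zero, add_zero, norm_zero, mul_zero]
    have : 0 < ‖x₁ - x_p‖ := norm_sub_pos_iff.mpr (Ne.symm hne)
    have := norm_sub_le x₁ x_p
    linarith
  set x₂ := x_e + s • (x₁ - x_e) with hx₂
  have hd : 0 < ‖x₁ - x_e‖ := norm_sub_pos_iff.mpr h1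
  have e1 : x₂ - x_e = s • (x₁ - x_e) := by rw [hx₂]; abel
  have e2 : x₁ - x₂ = (1 - s) • (x₁ - x_e) := by
    rw [hx₂]; rw [sub_smul, one_smul]; abel
  have n1 : ‖x₂ - x_e‖ = s * ‖x₁ - x_e‖ := by
    rw [e1, norm_smul, Real.norm_of_nonneg hs0]
  have n2 : ‖x₁ - x₂‖ = (1 - s) * ‖x₁ - x_e‖ := by
    rw [e2, norm_smul, Real.norm_of_nonneg (by linarith)]
  have tri : ‖x₁ - x_p‖ ≤ ‖x₁ - x₂‖ + ‖x₂ - x_p‖ := by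
    have := norm_sub_le_norm_sub_add_norm_sub x₁ x₂ x_p
    linarith [norm_add_le (x₁ - x₂) (x₂ - x_p)]
  have tri2 : ‖x₂ - x_p‖ ≤ ‖x₂‖ + ‖x_p‖ := norm_sub_le x₂ x_p
  have key : (α - 1) * (1 - s) * ‖x₁ - x_e‖ > 0 := by
    apply mul_pos (mul_pos (by linarith) (by linarith)) hd
  rw [n1]
  nlinarith
end

section
/- Let α > 1 and x_p, x_e, x ∈ ℝ² with x_p ≠ x_e and ‖x − x_p‖ = α·‖x − x_e‖. Then ⟨x_e − x_p, x − x_p⟩ ≥ √(1 − 1/α²)·‖x_e − x_p‖·‖x − x_p‖ > 0; in other words, the angle at x_p between the direction to x and the direction to x_e is acute, with sine at most 1/α. -/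
open scoped RealInnerProductSpace

/-- For `α > 1`, `x_p ≠ x_e` and `x` on the Apollonius circle
(`‖x − x_p‖ = α‖x − x_e‖`), one has
`⟨x_e − x_p, x − x_p⟩ ≥ √(1 − 1/α²)·‖x_e − x_p‖·‖x − x_p‖ > 0`: the angle at `x_p` between
the directions to `x` and to `x_e` is acute, with sine at most `1/α`. -/
theorem stmt13 (α : ℝ) (hα : 1 < α) (x_p x_e x : EuclideanSpace ℝ (Fin 2))
    (hne : x_p ≠ x_e) (hx : ‖x - x_p‖ = α * ‖x - x_e‖) :
    Real.sqrt (1 - 1 / α ^ 2) * (‖x_e - x_p‖ * ‖x - x_p‖) ≤ ⟪x_e - x_p, x - x_p⟫ ∧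
    0 < Real.sqrt (1 - 1 / α ^ 2) * (‖x_e - x_p‖ * ‖x - x_p‖) := by
  have hα0 : (0:ℝ) < α := lt_trans one_pos hα
  have hc : (0:ℝ) < 1 - 1 / α ^ 2 := by
    have : 1 / α ^ 2 < 1 := by
      rw [div_lt_one (by positivity)]
      nlinarith
    linarith
  have hA : 0 < ‖x_e - x_p‖ := by
    rw [norm_pos_iff, sub_ne_zero]
    exact fun h => hne h.symm
  have hxne : x ≠ x_p := by
    intro h
    subst h
    rw [sub_self, norm_zero] at hx
    have : x = x_e := by
      replace hx := (mul_eq_zero.mp hx.symm).imp id norm_eq_zero.mp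
      rcases hx with h | h
      · exact absurd h (ne_of_gt hα0)
      · exact sub_eq_zero.mp h
    subst this
    exact hne rfl
  have hB : 0 < ‖x - x_p‖ := by
    rw [norm_pos_iff, sub_ne_zero]; exact hxne
  have hs : Real.sqrt (1 - 1/α^2) ^ 2 = 1 - 1/α^2 := Real.sq_sqrt (le_of_lt hc)
  have hs0 : 0 < Real.sqrt (1 - 1/α^2) := Real.sqrt_pos.mpr hc
  constructor
  · have hkey : ‖(x - x_p) - (x_e - x_p)‖ = ‖x - x_e‖ := by
      congr 1; abel
    have h1 : ‖(x - x_p) - (x_e - x_p)‖^2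
        = ‖x - x_p‖^2 - 2 * ⟪x - x_p, x_e - x_p⟫ + ‖x_e - x_p‖^2 :=
      norm_sub_sq_real _ _
    rw [hkey] at h1
    have h2 : ‖x - x_p‖^2 = α^2 * ‖x - x_e‖^2 := by rw [hx]; ring
    have h3 : ⟪x_e - x_p, x - x_p⟫ = ⟪x - x_p, x_e - x_p⟫ := real_inner_comm _ _
    rw [h3]
    have hα2 : (0:ℝ) < α^2 := by positivity
    have h4 : 2 * ⟪x - x_p, x_e - x_p⟫
        = ‖x_e - x_p‖^2 + (1 - 1/α^2) * ‖x - x_p‖^2 := by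
      have : ‖x - x_e‖^2 = ‖x - x_p‖^2 / α^2 := by
        field_simp at h2 ⊢; linarith
      rw [this] at h1
      field_simp at h1 ⊢
      nlinarith
    nlinarith [sq_nonneg (‖x_e - x_p‖ - Real.sqrt (1 - 1/α^2) * ‖x - x_p‖)]
  · positivity
end

section
/- Fix θ₀ ∈ (0, π/2) and α > 1, and let X = {(ρ·cos θ, ρ·sin θ) : ρ ≥ 0, θ ∈ [θ₀, 2π − θ₀]} ⊆ ℝ² with shortest-path distance d_L(x₁, x₂) = ‖x₁ − x₂‖ if the segment joining x₁ and x₂ is contained in X, and d_L(x₁, x₂) = ‖x₁‖ + ‖x₂‖ otherwise. Let x_p, x_e ∈ X with ‖x_p‖ < α·‖x_e‖. Then every x ∈ X with d_L(x, x_p) = α·d_L(x, x_e) satisfies d_L(x, x_e) = ‖x − x_e‖ (the shortest path from x_e to x is the straight segment), and consequently either ‖x − x_p‖ = α·‖x − x_e‖ (when the segment joining x and x_p lies in X) or ‖x‖ + ‖x_p‖ = α·‖x − x_e‖ (otherwise). Hence the boundary of the evader's dominance region is contained in the union of the Apollonius circle with foci x_p, x_e and the second-type Cartesian oval with foci the origin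 and x_e. -/
open MeasureTheory
open scoped ENNReal RealInnerProductSpace

noncomputable section

/-- The corner-obstacle game region
`X = {(ρ cos θ, ρ sin θ) : ρ ≥ 0, θ ∈ [θ₀, 2π − θ₀]}`, the complement of an open wedge of
half-angle `θ₀` around the positive x-axis with vertex at the origin. -/
def gameRegion (θ₀ : ℝ) : Set Pt :=
  {x | ∃ ρ θ : ℝ, 0 ≤ ρ ∧ θ ∈ Set.Icc θ₀ (2 * Real.pi - θ₀) ∧
    x = (WithLp.equiv 2 (Fin 2 → ℝ)).symm ![ρ * Real.cos θ, ρ * Real.sin θ]}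

open Classical in
/-- The shortest-path distance on the corner-obstacle region: the Euclidean distance if the
segment joining the two points stays in the region, and the length of the two-segment path
through the origin (the obstacle's vertex) otherwise. -/
def dL (θ₀ : ℝ) (x₁ x₂ : Pt) : ℝ :=
  if segment ℝ x₁ x₂ ⊆ gameRegion θ₀ then ‖x₁ - x₂‖ else ‖x₁‖ + ‖x₂‖

/-- In the corner-obstacle region with `θ₀ ∈ (0, π/2)`, `α > 1`, and
`x_p, x_e ∈ X` with `‖x_p‖ < α‖x_e‖`, every `x ∈ X` on the boundary of the evader's
dominance region (`d_L(x, x_p) = α·d_L(x, x_e)`) satisfies `d_L(x, x_e) = ‖x − x_e‖`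
(the shortest path from `x_e` to `x` is straight), and consequently either
`‖x − x_p‖ = α‖x − x_e‖` (when the segment joining `x` and `x_p` lies in `X`) or
`‖x‖ + ‖x_p‖ = α‖x − x_e‖` (otherwise). -/
theorem stmt14 (θ₀ α : ℝ) (hθ : θ₀ ∈ Set.Ioo 0 (Real.pi / 2)) (hα : 1 < α)
    (x_p x_e : Pt) (hxp : x_p ∈ gameRegion θ₀) (hxe : x_e ∈ gameRegion θ₀)
    (hv : ‖x_p‖ < α * ‖x_e‖)
    (x : Pt) (hx : x ∈ gameRegion θ₀) (hbd : dL θ₀ x x_p = α * dL θ₀ x x_e) :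
    dL θ₀ x x_e = ‖x - x_e‖ ∧
    (segment ℝ x x_p ⊆ gameRegion θ₀ → ‖x - x_p‖ = α * ‖x - x_e‖) ∧
    (¬ segment ℝ x x_p ⊆ gameRegion θ₀ → ‖x‖ + ‖x_p‖ = α * ‖x - x_e‖) := by
  have hxene : segment ℝ x x_e ⊆ gameRegion θ₀ := by
    by_contra hs
    have he : dL θ₀ x x_e = ‖x‖ + ‖x_e‖ := by simp [dL, hs]
    have htri : ‖x - x_p‖ ≤ ‖x‖ + ‖x_p‖ := norm_sub_le _ _
    have hp : dL θ₀ x x_p ≤ ‖x‖ + ‖x_p‖ := by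
      by_cases hsp : segment ℝ x x_p ⊆ gameRegion θ₀ <;> simp [dL, hsp, htri]
    rw [he] at hbd
    have hxn : (0:ℝ) ≤ ‖x‖ := norm_nonneg x
    nlinarith [hbd, hp, hv, hα, hxn]
  have he : dL θ₀ x x_e = ‖x - x_e‖ := by simp [dL, hxene]
  rw [he] at hbd
  refine ⟨he, ?_, ?_⟩
  · intro hsp
    simpa [dL, hsp] using hbd
  · intro hsp
    simpa [dL, hsp] using hbd

end
end
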